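/- Let α = (α₁,α₂,α₃;α₁′,α₂′) be non-negative integers with α₁+α₂+α₃ = α₁′+α₂′ = n and αᵢ + αⱼ′ ≤ n for all i ∈ {1,2,3}, j ∈ {1,2}. Set m = α₁′. Then the number N of triples (a₁,a₂,a₃) of non-negative integers with aᵢ ≤ αᵢ for each i and a₁+a₂+a₃ = m equals (n + d + 1)/2, where d = 1 + n² − Σᵢαᵢ² − Σⱼ(αⱼ′)². -/

import Mathlib

open Finset

lemma sum_const_sub' (m c : ℕ) (h : c ≤ m) :
    ∑ x ∈ range (m+1), (c - x) = ∑ j ∈ range (c+1), j := by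
  have h1 : ∑ x ∈ range (c+1), (c - x) = ∑ x ∈ range (m+1), (c - x) := by
    apply Finset.sum_subset (Finset.range_subset_range.mpr (by omega))
    intro x _ hx
    simp only [Finset.mem_range] at hx
    omega
  rw [← h1, ← Finset.sum_range_reflect (fun j => j) (c+1)]
  apply Finset.sum_congr rfl
  intro x hx
  simp only [Finset.mem_range] at hx
  omega

lemma sum_sub_const' (m c : ℕ) (h : c ≤ m) :
    ∑ x ∈ range (m+1), (x - c) = ∑ j ∈ range (m - c + 1), j := by
  rw [← Finset.sum_range_reflect (fun x => x - c) (m+1)]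
  rw [← sum_const_sub' m (m - c) (by omega)]
  apply Finset.sum_congr rfl
  intro x hx
  simp only [Finset.mem_range] at hx
  omega

lemma fiber_card' (a1 a2 a3 x k : ℕ) (hx : x ≤ a1) :
    (((Finset.range (a1 + 1) ×ˢ Finset.range (a2 + 1) ×ˢ Finset.range (a3 + 1)).filter
        (fun t => t.1 + t.2.1 + t.2.2 = x + k)).filter (fun t => t.1 = x)).card
      = min a2 k + 1 - (k - a3) := by
  rw [← Nat.card_Icc (k - a3) (min a2 k)]
  apply Finset.card_bij (fun t _ => t.2.1)
  · intro t ht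
    simp only [Finset.mem_filter, Finset.mem_product, Finset.mem_range,
      Finset.mem_Icc, and_true, true_and] at ht ⊢
    omega
  · intro t ht s hs hts
    simp only [Finset.mem_filter, Finset.mem_product, Finset.mem_range] at ht hs
    obtain ⟨⟨⟨_, _, _⟩, _⟩, _⟩ := ht
    obtain ⟨⟨⟨_, _, _⟩, _⟩, _⟩ := hs
    ext
    · omega
    · exact hts
    · omega
  · intro y hy
    simp only [Finset.mem_Icc] at hy
    refine ⟨(x, y, k - y), ?_, rfl⟩
    simp only [Finset.mem_filter, Finset.mem_product, Finset.mem_range, and_true]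
    omega


/-- Counting maximally iterated extensions: for a dimension vector
`α = (α₁,α₂,α₃;α₁',α₂')` with `α₁+α₂+α₃ = α₁'+α₂' = n` and `αᵢ + αⱼ' ≤ n`,
the number `N` of triples `(a₁,a₂,a₃)` with `aᵢ ≤ αᵢ` and `a₁+a₂+a₃ = α₁'`
satisfies `N = (n + d + 1)/2`, where `d = 1 + n² - Σαᵢ² - Σ(αⱼ')²`. -/
theorem count_maximally_iterated_extensions (n : ℕ) (a1 a2 a3 b1 b2 : ℕ)
    (ha : a1 + a2 + a3 = n) (hb : b1 + b2 = n)
    (hij : ∀ a ∈ ({a1, a2, a3} : Set ℕ), ∀ b ∈ ({b1, b2} : Set ℕ), a + b ≤ n) :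
    (2 : ℤ) * ((Finset.range (a1 + 1) ×ˢ Finset.range (a2 + 1) ×ˢ
        Finset.range (a3 + 1)).filter
          (fun t => t.1 + t.2.1 + t.2.2 = b1)).card =
      (n : ℤ) + (1 + (n : ℤ) ^ 2 - ((a1 : ℤ) ^ 2 + (a2 : ℤ) ^ 2 + (a3 : ℤ) ^ 2)
        - ((b1 : ℤ) ^ 2 + (b2 : ℤ) ^ 2)) + 1 := by
  have h11 : a1 + b1 ≤ n := hij a1 (by simp) b1 (by simp)
  have h12 : a1 + b2 ≤ n := hij a1 (by simp) b2 (by simp)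
  have h21 : a2 + b1 ≤ n := hij a2 (by simp) b1 (by simp)
  have h22 : a2 + b2 ≤ n := hij a2 (by simp) b2 (by simp)
  have h31 : a3 + b1 ≤ n := hij a3 (by simp) b1 (by simp)
  have h32 : a3 + b2 ≤ n := hij a3 (by simp) b2 (by simp)
  have ha1b : a1 ≤ b1 := by omega
  have ha2b : a2 ≤ b1 := by omega
  have ha3b : a3 ≤ b1 := by omega
  have hb23 : b1 ≤ a2 + a3 := by omega
  have hb13 : b1 ≤ a1 + a3 := by omega
  have hb12 : b1 ≤ a1 + a2 := by omega
  set S := (Finset.range (a1 + 1) ×ˢ Finset.range (a2 + 1) ×ˢ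
      Finset.range (a3 + 1)).filter (fun t => t.1 + t.2.1 + t.2.2 = b1) with hS
  have hN : S.card = ∑ x ∈ range (a1+1), (min a2 (b1 - x) + 1 - (b1 - x - a3)) := by
    rw [Finset.card_eq_sum_card_fiberwise (f := fun t => t.1) (t := range (a1+1))
      (by intro t ht
          simp only [hS, Finset.mem_coe, Finset.mem_filter, Finset.mem_product, Finset.mem_range] at ht ⊢
          omega)]
    apply Finset.sum_congr rfl
    intro x hx
    simp only [Finset.mem_range] at hx
    have hfc := fiber_card' a1 a2 a3 x (b1 - x) (by omega)
    rw [show x + (b1 - x) = b1 from by omega] at hfc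
    exact hfc
  have key : ∀ x ∈ range (a1+1),
      ((min a2 (b1 - x) + 1 - (b1 - x - a3) : ℕ) : ℤ)
        = ((a2 : ℤ) + 1) - ((x - (b1 - a2) : ℕ) : ℤ) - (((b1 - a3) - x : ℕ) : ℤ) := by
    intro x hx
    simp only [Finset.mem_range] at hx
    omega
  have e1 : (S.card : ℤ) = ((a1 : ℤ) + 1) * ((a2 : ℤ) + 1)
      - ((∑ x ∈ range (a1+1), (x - (b1 - a2)) : ℕ) : ℤ)
      - ((∑ x ∈ range (a1+1), ((b1 - a3) - x) : ℕ) : ℤ) := by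
    rw [hN, Nat.cast_sum, Finset.sum_congr rfl key, Finset.sum_sub_distrib,
      Finset.sum_sub_distrib, Finset.sum_const, Finset.card_range, Nat.cast_sum,
      Nat.cast_sum, nsmul_eq_mul]
    push_cast
    ring
  have gauss : ∀ m : ℕ, 2 * ((∑ j ∈ range (m+1), j : ℕ) : ℤ) = (m : ℤ) * ((m : ℤ) + 1) := by
    intro m
    have h2 : (∑ i ∈ range (m+1), i) * 2 = (m+1) * m := by
      simpa using Finset.sum_range_id_mul_two (m+1)
    calc 2 * ((∑ j ∈ range (m+1), j : ℕ) : ℤ)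
        = (((∑ j ∈ range (m+1), j) * 2 : ℕ) : ℤ) := by push_cast; ring
      _ = (((m+1) * m : ℕ) : ℤ) := by rw [h2]
      _ = (m : ℤ) * ((m : ℤ) + 1) := by push_cast; ring
  have g1 : 2 * ((∑ x ∈ range (a1+1), (x - (b1 - a2)) : ℕ) : ℤ)
      = ((a1 - (b1 - a2) : ℕ) : ℤ) * (((a1 - (b1 - a2) : ℕ) : ℤ) + 1) := by
    rw [sum_sub_const' a1 (b1 - a2) (by omega)]
    exact gauss _
  have g2 : 2 * ((∑ x ∈ range (a1+1), ((b1 - a3) - x) : ℕ) : ℤ)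
      = ((b1 - a3 : ℕ) : ℤ) * (((b1 - a3 : ℕ) : ℤ) + 1) := by
    rw [sum_const_sub' a1 (b1 - a3) (by omega)]
    exact gauss _
  have hc2 : ((a1 - (b1 - a2) : ℕ) : ℤ) = (a1 : ℤ) + a2 - b1 := by omega
  have hc3 : ((b1 - a3 : ℕ) : ℤ) = (b1 : ℤ) - a3 := by omega
  rw [hc2] at g1
  rw [hc3] at g2
  have hn : (n : ℤ) = (a1 : ℤ) + a2 + a3 := by omega
  have hb2 : (b2 : ℤ) = (a1 : ℤ) + a2 + a3 - b1 := by omega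
  rw [e1, hn, hb2]
  linear_combination -g1 - g2
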